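/- Let a ≤ b ≤ c be real and λ_− = (a+b+c)/3 − (√2/3)·√(3(a²+b²+c²) − (a+b+c)²). If a ≥ 0 (nonnegative sectional curvature), then λ_− + a + b + (1/3)c ≥ 0, i.e., the curvature operator of the second kind is 3⅓-nonnegative. -/
import Mathlib

theorem stmt6 (a b c : ℝ) (hab : a ≤ b) (hbc : b ≤ c) (ha : a ≥ 0) :
    ((a + b + c) / 3 - Real.sqrt 2 / 3 * Real.sqrt (3 * (a^2 + b^2 + c^2) - (a + b + c)^2))
      + a + b + (1 / 3) * c ≥ 0 := by
  have hb : b ≥ 0 := le_trans ha hab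
  have hc : c ≥ 0 := le_trans hb hbc
  have key : Real.sqrt 2 * Real.sqrt (3 * (a^2 + b^2 + c^2) - (a + b + c)^2)
      ≤ 4*a + 4*b + 2*c := by
    rw [← Real.sqrt_mul (by norm_num)]
    have h1 : Real.sqrt (2 * (3 * (a^2 + b^2 + c^2) - (a + b + c)^2))
        ≤ Real.sqrt ((4*a + 4*b + 2*c)^2) := by
      apply Real.sqrt_le_sqrt
      nlinarith [mul_nonneg ha hb, mul_nonneg ha hc, mul_nonneg hb hc, sq_nonneg a, sq_nonneg b]
    rwa [Real.sqrt_sq (by linarith : (0:ℝ) ≤ 4*a + 4*b + 2*c)] at h1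
  have h2 : Real.sqrt 2 / 3 * Real.sqrt (3 * (a^2 + b^2 + c^2) - (a + b + c)^2)
      = Real.sqrt 2 * Real.sqrt (3 * (a^2 + b^2 + c^2) - (a + b + c)^2) / 3 := by ring
  rw [h2]
  linarith
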